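/- arXiv:0906.4111 — 2 statements merged into one kernel-verified Lean document; each statement's English description precedes it below -/
import Mathlib

section
/- Let F be the face lattice (boundary simplicial complex) of a simplicial d-polytope, viewed as a simplicial complex triangulating the sphere S^{d-1}. Then no proper subcomplex of F with the same vertex set is the boundary complex of a simplicial d-polytope. -/
open Geometry Finset

lemma centroid_subset_of_mem_convexHull {V : Type*} [AddCommGroup V] [Module ℝ V]
    {s u : Finset V} (hs : AffineIndependent ℝ ((↑) : s → V)) (hu : u ⊆ s)
    (hne : s.Nonempty) (hx : s.centroid ℝ id ∈ convexHull ℝ (u : Set V)) : s ⊆ u := by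
  classical
  obtain ⟨w, hw0, hw1, hwx⟩ := Finset.mem_convexHull'.1 hx
  have hcard : (#s : ℝ) ≠ 0 := by
    simpa using Finset.card_ne_zero_of_mem hne.choose_spec
  set c : ↥s → ℝ := fun _ => (#s : ℝ)⁻¹ with hc
  set w' : ↥s → ℝ := fun i => if (i : V) ∈ u then w i else 0 with hw'
  have hc1 : ∑ i : ↥s, c i = 1 := by
    simp [hc, Finset.card_univ, mul_inv_cancel₀ hcard]
  have hw'1 : ∑ i : ↥s, w' i = 1 := by
    rw [Finset.sum_coe_sort s (fun y => if y ∈ u then w y else 0)]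
    rw [Finset.sum_ite_mem, Finset.inter_eq_right.2 hu, hw1]
  have heq : Finset.univ.affineCombination ℝ ((↑) : ↥s → V) c =
      Finset.univ.affineCombination ℝ ((↑) : ↥s → V) w' := by
    rw [affineCombination_eq_centerMass hc1, affineCombination_eq_centerMass hw'1,
      Finset.centerMass_eq_of_sum_1 _ _ hc1, Finset.centerMass_eq_of_sum_1 _ _ hw'1,
      Finset.sum_coe_sort s (fun y => ((#s : ℝ)⁻¹ : ℝ) • y),
      Finset.sum_coe_sort s (fun y => (if y ∈ u then w y else 0) • y)]
    have h2 : ∑ y ∈ s, (if y ∈ u then w y else 0) • y = ∑ y ∈ u, w y • y := by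
      simp only [ite_smul, zero_smul]
      rw [Finset.sum_ite_mem, Finset.inter_eq_right.2 hu]
    rw [h2, hwx]
    have h1 : s.centroid ℝ id = ∑ y ∈ s, (#s : ℝ)⁻¹ • y := by
      rw [s.centroid_eq_centerMass hne, Finset.centerMass_eq_of_sum_1]
      · simp
      · simp [mul_inv_cancel₀ hcard]
    rw [← h1]
  have hind := hs.indicator_eq_of_affineCombination_eq Finset.univ Finset.univ c w' hc1 hw'1 heq
  intro y hy
  by_contra hyu
  have := congrFun hind ⟨y, hy⟩
  simp [hc, hw', hyu, Set.indicator_apply] at this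
  exact hne.ne_empty this


/-- Lemma 7.9 (esm): if K is the boundary complex of a simplicial d-polytope
(its space is the frontier of the convex hull of its vertices, which has
nonempty interior), then no proper subcomplex of K on the same vertex set is
itself the boundary complex of a simplicial d-polytope. -/
theorem stmt_17 {d : ℕ}
    (K L : SimplicialComplex ℝ (EuclideanSpace ℝ (Fin d)))
    (hKspace : K.space = frontier (convexHull ℝ K.vertices))
    (hKint : (interior (convexHull ℝ K.vertices)).Nonempty)
    (hsub : L.faces ⊆ K.faces)
    (hvert : L.vertices = K.vertices)
    (hLspace : L.space = frontier (convexHull ℝ L.vertices))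
    (hLint : (interior (convexHull ℝ L.vertices)).Nonempty) :
    L.faces = K.faces := by
  classical
  have hspace : K.space = L.space := by rw [hKspace, hLspace, hvert]
  refine Set.Subset.antisymm hsub fun s hsK => ?_
  have hne : s.Nonempty := Finset.nonempty_of_ne_empty (by rintro rfl; exact K.empty_notMem hsK)
  have hxK : s.centroid ℝ id ∈ K.space :=
    SimplicialComplex.convexHull_subset_space hsK (s.centroid_mem_convexHull hne)
  rw [hspace, SimplicialComplex.mem_space_iff] at hxK
  obtain ⟨t, htL, hxt⟩ := hxK
  have hxst : s.centroid ℝ id ∈ convexHull ℝ ((s ∩ t : Finset _) : Set (EuclideanSpace ℝ (Fin d))) := by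
    have := K.inter_subset_convexHull hsK (hsub htL)
      ⟨s.centroid_mem_convexHull hne, hxt⟩
    simpa using this
  have hst : s ⊆ s ∩ t :=
    centroid_subset_of_mem_convexHull (K.indep hsK) Finset.inter_subset_left hne hxst
  exact L.down_closed htL (hst.trans Finset.inter_subset_right) hne
end

section
/- Let A be an (n×n) real symmetric matrix of the block form where A is the Gram matrix of a graph consisting of subgraphs Σ₁,…,Σ_l having a unique common vertex v and no edges between Σ_i \ {v} and Σ_j \ {v} for i ≠ j, with all diagonal entries 1. Define det(Σ, v) = det(A)/det(A_v) where A_v is A with the row and column of v deleted (assuming det(A_v) ≠ 0, and likewise for each Σᵢ). Then det(Σ, v) = Σᵢ det(Σᵢ, v) - (l - 1). -/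
open Matrix

/-- Schur complement computation for a matrix over `Unit ⊕ m` with top-left entry 1. -/
lemma key_schur {m : Type*} [Fintype m] [DecidableEq m]
    (M : Matrix (Unit ⊕ m) (Unit ⊕ m) ℝ)
    (h11 : M (Sum.inl ()) (Sum.inl ()) = 1) (hd : M.toBlocks₂₂.det ≠ 0) :
    M.det / M.toBlocks₂₂.det
      = 1 - ∑ a, ∑ b, M (Sum.inl ()) (Sum.inr a) * (M.toBlocks₂₂)⁻¹ a b
          * M (Sum.inr b) (Sum.inl ()) := by
  haveI : Invertible M.toBlocks₂₂ :=
    M.toBlocks₂₂.invertibleOfIsUnitDet (isUnit_iff_ne_zero.2 hd)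
  have hdet : M.det = M.toBlocks₂₂.det *
      (M.toBlocks₁₁ - M.toBlocks₁₂ * ⅟M.toBlocks₂₂ * M.toBlocks₂₁).det := by
    conv_lhs => rw [← Matrix.fromBlocks_toBlocks M]
    exact Matrix.det_fromBlocks₂₂ _ _ _ _
  rw [hdet, mul_comm, mul_div_assoc, div_self hd, mul_one]
  rw [Matrix.det_unique, ← Matrix.invOf_eq_nonsing_inv]
  simp only [Matrix.sub_apply, Matrix.mul_apply]
  have e1 : M.toBlocks₁₁ default default = 1 := h11
  rw [e1]
  congr 1
  · rw [Finset.sum_comm]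
    refine Finset.sum_congr rfl fun b _ => ?_
    rw [Finset.sum_mul]
    refine Finset.sum_congr rfl fun a _ => ?_
    show M (Sum.inl ()) (Sum.inr a) * ⅟M.toBlocks₂₂ a b * M (Sum.inr b) (Sum.inl ()) = _
    ring

/-- Proposition 3.1 (local determinants): for a symmetric matrix with unit
diagonal which is the Gram matrix of a wedge of diagrams Σ₁,…,Σ_l at a common
vertex v (no entries between distinct parts away from v), the local determinant
det(Σ,v) = det A / det(A with v removed) satisfies
det(Σ,v) = ∑ᵢ det(Σᵢ,v) - (l-1). -/
theorem stmt_18 {l : ℕ} {α : Fin l → Type*}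
    [∀ i, Fintype (α i)] [∀ i, DecidableEq (α i)]
    (A : Matrix (Unit ⊕ Σ i, α i) (Unit ⊕ Σ i, α i) ℝ)
    (hsymm : A.IsSymm) (hdiag : ∀ x, A x x = 1)
    (hblock : ∀ i j, i ≠ j → ∀ (a : α i) (b : α j),
      A (Sum.inr ⟨i, a⟩) (Sum.inr ⟨j, b⟩) = 0)
    (hAv : (Matrix.of fun a b : Σ i, α i => A (Sum.inr a) (Sum.inr b)).det ≠ 0)
    (hCi : ∀ i, (Matrix.of fun a b : α i => A (Sum.inr ⟨i, a⟩) (Sum.inr ⟨i, b⟩)).det ≠ 0) :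
    A.det / (Matrix.of fun a b : Σ i, α i => A (Sum.inr a) (Sum.inr b)).det
      = (∑ i,
          (Matrix.of fun x y : Unit ⊕ α i =>
            A (Sum.map id (Sigma.mk i) x) (Sum.map id (Sigma.mk i) y)).det
          / (Matrix.of fun a b : α i => A (Sum.inr ⟨i, a⟩) (Sum.inr ⟨i, b⟩)).det)
        - ((l : ℝ) - 1) := by
  classical
  set C : ∀ i, Matrix (α i) (α i) ℝ :=
    fun i => Matrix.of fun a b : α i => A (Sum.inr ⟨i, a⟩) (Sum.inr ⟨i, b⟩) with hC
  set D : Matrix (Σ i, α i) (Σ i, α i) ℝ :=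
    Matrix.of fun a b : Σ i, α i => A (Sum.inr a) (Sum.inr b) with hD
  -- D is block diagonal
  have hDbd : D = Matrix.blockDiagonal' C := by
    ext ⟨i, a⟩ ⟨j, b⟩
    by_cases hij : i = j
    · subst hij; simp [hD, hC, Matrix.blockDiagonal'_apply_eq]
    · rw [Matrix.blockDiagonal'_apply_ne _ _ _ hij]
      exact hblock i j hij a b
  -- inverse of D
  have hDinv : D⁻¹ = Matrix.blockDiagonal' fun i => (C i)⁻¹ := by
    apply Matrix.inv_eq_right_inv
    rw [hDbd, ← Matrix.blockDiagonal'_mul]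
    have : (fun i => C i * (C i)⁻¹) = fun i => (1 : Matrix (α i) (α i) ℝ) := by
      funext i
      exact Matrix.mul_nonsing_inv _ (isUnit_iff_ne_zero.2 (hCi i))
    rw [this]
    exact Matrix.blockDiagonal'_one
  have hAtb : A.toBlocks₂₂ = D := rfl
  have h1 := key_schur A (hdiag _) (hAtb ▸ hAv)
  rw [hAtb] at h1
  have h2 : ∀ i, (Matrix.of fun x y : Unit ⊕ α i =>
        A (Sum.map id (Sigma.mk i) x) (Sum.map id (Sigma.mk i) y)).det / (C i).det
      = 1 - ∑ a, ∑ b, A (Sum.inl ()) (Sum.inr ⟨i, a⟩) * (C i)⁻¹ a b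
          * A (Sum.inr ⟨i, b⟩) (Sum.inl ()) := by
    intro i
    have := key_schur (Matrix.of fun x y : Unit ⊕ α i =>
        A (Sum.map id (Sigma.mk i) x) (Sum.map id (Sigma.mk i) y)) (hdiag _) ?_
    · convert this using 2 <;> rfl
    · exact hCi i
  rw [h1]
  rw [Finset.sum_congr rfl fun i _ => h2 i]
  rw [Finset.sum_sub_distrib, Finset.sum_const, Finset.card_univ, Fintype.card_fin,
    nsmul_eq_mul, mul_one]
  have hsum : (∑ a, ∑ b, A (Sum.inl ()) (Sum.inr a) * D⁻¹ a b * A (Sum.inr b) (Sum.inl ()))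
      = ∑ i, ∑ a, ∑ b, A (Sum.inl ()) (Sum.inr ⟨i, a⟩) * (C i)⁻¹ a b
          * A (Sum.inr ⟨i, b⟩) (Sum.inl ()) := by
    rw [← Finset.univ_sigma_univ, Finset.sum_sigma]
    refine Finset.sum_congr rfl fun i _ => ?_
    refine Finset.sum_congr rfl fun a _ => ?_
    rw [Finset.sum_sigma]
    rw [Finset.sum_eq_single_of_mem i (Finset.mem_univ i)]
    · refine Finset.sum_congr rfl fun b _ => ?_
      rw [hDinv, Matrix.blockDiagonal'_apply_eq]
    · intro j _ hji
      apply Finset.sum_eq_zero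
      intro b _
      rw [hDinv, Matrix.blockDiagonal'_apply_ne _ _ _ (Ne.symm hji)]
      ring
  rw [hsum]
  ring
end
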